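/- Let Q ∈ ℝ^{c×c} be symmetric positive definite and let L_Q ∈ ℝ^{c×c} be an invertible matrix with L_Qᵀ L_Q = Q. Let L₋ ∈ ℝ^{c₋×c₋} be invertible with X₋ = L₋ᵀ L₋. Let Y ∈ ℝ^{c×c}, Z ∈ ℝ^{c₋×c} and let (U, V) be the Cayley transform of (Y, Z). Then W = L_Q⁻¹ Vᵀ L₋ satisfies X₋ − Wᵀ Q W ⪰ 0. -/

import Mathlib

open Matrix

lemma dp_self_nonneg {n : ℕ} (v : Fin n → ℝ) : 0 ≤ v ⬝ᵥ v :=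
  Finset.sum_nonneg fun i _ => mul_self_nonneg _

/-- If `1 - VᵀV` is PSD then so is `1 - VVᵀ`. -/
lemma one_sub_self_mul_transpose_posSemidef {m n : ℕ} (V : Matrix (Fin m) (Fin n) ℝ)
    (h : (1 - Vᵀ * V).PosSemidef) : (1 - V * Vᵀ).PosSemidef := by
  have e : ∀ z : Fin n → ℝ, z ⬝ᵥ ((Vᵀ * V) *ᵥ z) = (V *ᵥ z) ⬝ᵥ (V *ᵥ z) := by
    intro z
    rw [← mulVec_mulVec, dotProduct_mulVec, vecMul_transpose]
  have h' : ∀ z : Fin n → ℝ, (V *ᵥ z) ⬝ᵥ (V *ᵥ z) ≤ z ⬝ᵥ z := by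
    intro z
    have := h.dotProduct_mulVec_nonneg z
    rw [star_trivial, sub_mulVec, one_mulVec, dotProduct_sub, e] at this
    linarith
  refine posSemidef_iff_dotProduct_mulVec.mpr ⟨?_, ?_⟩
  · unfold Matrix.IsHermitian
    simp [conjTranspose_eq_transpose_of_trivial, transpose_sub, transpose_mul]
  · intro x
    have hx : x ⬝ᵥ ((1 - V * Vᵀ) *ᵥ x) = x ⬝ᵥ x - (Vᵀ *ᵥ x) ⬝ᵥ (Vᵀ *ᵥ x) := by
      rw [sub_mulVec, one_mulVec, dotProduct_sub, ← mulVec_mulVec, dotProduct_mulVec,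
        ← mulVec_transpose]
    set y := Vᵀ *ᵥ x with hy
    have hs : 0 ≤ y ⬝ᵥ y := dp_self_nonneg y
    have hxx : 0 ≤ x ⬝ᵥ x := dp_self_nonneg x
    have hcs : (x ⬝ᵥ (V *ᵥ y)) ^ 2 ≤ (x ⬝ᵥ x) * ((V *ᵥ y) ⬝ᵥ (V *ᵥ y)) := by
      have := Finset.sum_mul_sq_le_sq_mul_sq Finset.univ x (V *ᵥ y)
      simpa [dotProduct, sq] using this
    have hxy : x ⬝ᵥ (V *ᵥ y) = y ⬝ᵥ y := by
      rw [dotProduct_mulVec, ← mulVec_transpose]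
    have key : (y ⬝ᵥ y) ^ 2 ≤ (x ⬝ᵥ x) * (y ⬝ᵥ y) := by
      calc (y ⬝ᵥ y) ^ 2 = (x ⬝ᵥ (V *ᵥ y)) ^ 2 := by rw [hxy]
        _ ≤ (x ⬝ᵥ x) * ((V *ᵥ y) ⬝ᵥ (V *ᵥ y)) := hcs
        _ ≤ (x ⬝ᵥ x) * (y ⬝ᵥ y) := mul_le_mul_of_nonneg_left (h' y) hxx
    have : y ⬝ᵥ y ≤ x ⬝ᵥ x := by
      rcases hs.eq_or_lt with hz | hz
      · linarith
      · nlinarith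
    rw [star_trivial, hx]
    linarith


lemma cayley_det_isUnit {c cm : ℕ} (Y : Matrix (Fin c) (Fin c) ℝ)
    (Z : Matrix (Fin cm) (Fin c) ℝ) :
    IsUnit (1 + (Y - Yᵀ + Zᵀ * Z)).det := by
  rw [isUnit_iff_ne_zero]
  intro hdet
  obtain ⟨v, hv, hv0⟩ := (Matrix.exists_mulVec_eq_zero_iff).mpr hdet
  have h0 : v ⬝ᵥ ((1 + (Y - Yᵀ + Zᵀ * Z)) *ᵥ v) = 0 := by rw [hv0, dotProduct_zero]
  have hYY : v ⬝ᵥ (Yᵀ *ᵥ v) = v ⬝ᵥ (Y *ᵥ v) := by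
    rw [dotProduct_mulVec, vecMul_transpose, dotProduct_comm]
  have hZZ : v ⬝ᵥ ((Zᵀ * Z) *ᵥ v) = (Z *ᵥ v) ⬝ᵥ (Z *ᵥ v) := by
    rw [← mulVec_mulVec, dotProduct_mulVec, vecMul_transpose]
  rw [add_mulVec, one_mulVec, add_mulVec, sub_mulVec, dotProduct_add, dotProduct_add,
    dotProduct_sub, hYY, hZZ] at h0
  have h1 : 0 < v ⬝ᵥ v := by
    rcases (dp_self_nonneg v).eq_or_lt with h | h
    · exact absurd (dotProduct_self_eq_zero.mp h.symm) hv
    · exact h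
  have h2 : 0 ≤ (Z *ᵥ v) ⬝ᵥ (Z *ᵥ v) := dp_self_nonneg _
  linarith

lemma cayley_orthogonality {c cm : ℕ}
    (Y : Matrix (Fin c) (Fin c) ℝ) (Z : Matrix (Fin cm) (Fin c) ℝ)
    (M : Matrix (Fin c) (Fin c) ℝ) (hM : M = Y - Yᵀ + Zᵀ * Z)
    (U : Matrix (Fin c) (Fin c) ℝ) (hU : U = (1 + M)⁻¹ * (1 - M))
    (V : Matrix (Fin cm) (Fin c) ℝ) (hV : V = (2 : ℝ) • (Z * (1 + M)⁻¹)) :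
    Uᵀ * U + Vᵀ * V = 1 := by
  set A := 1 + M with hA
  have hdet : IsUnit A.det := by rw [hA, hM]; exact cayley_det_isUnit Y Z
  have hAi : A⁻¹ * A = 1 := nonsing_inv_mul A hdet
  have hAi' : A * A⁻¹ = 1 := mul_nonsing_inv A hdet
  have hc : A * (1 - M) = (1 - M) * A := by rw [hA]; noncomm_ring
  have hc' : A⁻¹ * (1 - M) = (1 - M) * A⁻¹ := by
    calc A⁻¹ * (1 - M) = A⁻¹ * (1 - M) * (A * A⁻¹) := by rw [hAi', mul_one]
      _ = A⁻¹ * ((1 - M) * A) * A⁻¹ := by simp only [mul_assoc]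
      _ = A⁻¹ * (A * (1 - M)) * A⁻¹ := by rw [hc]
      _ = (1 - M) * A⁻¹ := by rw [← mul_assoc, hAi, one_mul]
  have hc'' : (1 - M)ᵀ * A⁻¹ᵀ = A⁻¹ᵀ * (1 - M)ᵀ := by
    have := congrArg Matrix.transpose hc'
    simp only [transpose_mul] at this
    exact this
  have hMM : M + Mᵀ = Zᵀ * Z + Zᵀ * Z := by
    rw [hM]
    simp only [transpose_add, transpose_sub, transpose_mul, transpose_transpose]
    abel
  have hid : (1 - M)ᵀ * (1 - M) + (4:ℝ) • (Zᵀ * Z) = Aᵀ * A := by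
    have expand : (1 - M)ᵀ * (1 - M) = 1 - M - Mᵀ + Mᵀ * M := by
      rw [transpose_sub, transpose_one]; noncomm_ring
    have expand2 : Aᵀ * A = 1 + M + Mᵀ + Mᵀ * M := by
      rw [hA, transpose_add, transpose_one]; noncomm_ring
    have h4 : (4:ℝ) • (Zᵀ * Z) = (2:ℝ) • (Zᵀ * Z) + (2:ℝ) • (Zᵀ * Z) := by
      rw [← add_smul]; norm_num
    rw [expand, expand2, h4, two_smul, ← hMM]
    abel
  have hUt : Uᵀ * U = A⁻¹ᵀ * ((1 - M)ᵀ * (1 - M)) * A⁻¹ := by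
    calc Uᵀ * U = ((1 - M)ᵀ * A⁻¹ᵀ) * (A⁻¹ * (1 - M)) := by rw [hU, transpose_mul]
      _ = (A⁻¹ᵀ * (1 - M)ᵀ) * ((1 - M) * A⁻¹) := by rw [hc'', hc']
      _ = A⁻¹ᵀ * ((1 - M)ᵀ * (1 - M)) * A⁻¹ := by simp only [mul_assoc]
  have hVt : Vᵀ * V = (4:ℝ) • (A⁻¹ᵀ * (Zᵀ * Z) * A⁻¹) := by
    rw [hV]
    rw [transpose_smul, transpose_mul]
    rw [Matrix.smul_mul, Matrix.mul_smul, smul_smul]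
    simp only [Matrix.mul_assoc]
    norm_num
  rw [hUt, hVt]
  have comb : A⁻¹ᵀ * ((1 - M)ᵀ * (1 - M)) * A⁻¹ + (4:ℝ) • (A⁻¹ᵀ * (Zᵀ * Z) * A⁻¹)
      = A⁻¹ᵀ * ((1 - M)ᵀ * (1 - M) + (4:ℝ) • (Zᵀ * Z)) * A⁻¹ := by
    simp only [mul_add, add_mul, mul_smul_comm, smul_mul_assoc]
  rw [comb, hid]
  calc A⁻¹ᵀ * (Aᵀ * A) * A⁻¹ = (A * A⁻¹)ᵀ * (A * A⁻¹) := by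
        rw [transpose_mul]; simp only [mul_assoc]
    _ = 1 := by rw [hAi', transpose_one, one_mul]

/-- The parameterization `W = L_Q⁻¹ Vᵀ L₋` of the last (affine)
layer, with `(U,V)` the Cayley transform of `(Y,Z)`, `L_Qᵀ L_Q = Q` and
`X₋ = L₋ᵀ L₋`, satisfies `X₋ − Wᵀ Q W ⪰ 0`. -/
theorem last_layer_parameterization_satisfies_LMI
    (c cm : ℕ)
    (Q LQ : Matrix (Fin c) (Fin c) ℝ) (hQpd : Q.PosDef)
    (hLQ : IsUnit LQ) (hLQQ : LQᵀ * LQ = Q)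
    (Lm : Matrix (Fin cm) (Fin cm) ℝ) (hLm : IsUnit Lm)
    (Xm : Matrix (Fin cm) (Fin cm) ℝ) (hXm : Xm = Lmᵀ * Lm)
    (Y : Matrix (Fin c) (Fin c) ℝ) (Z : Matrix (Fin cm) (Fin c) ℝ)
    (M : Matrix (Fin c) (Fin c) ℝ) (hM : M = Y - Yᵀ + Zᵀ * Z)
    (U : Matrix (Fin c) (Fin c) ℝ) (hU : U = (1 + M)⁻¹ * (1 - M))
    (V : Matrix (Fin cm) (Fin c) ℝ) (hV : V = (2 : ℝ) • (Z * (1 + M)⁻¹))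
    (W : Matrix (Fin c) (Fin cm) ℝ) (hW : W = LQ⁻¹ * Vᵀ * Lm) :
    (Xm - Wᵀ * Q * W).PosSemidef := by
  have hUV := cayley_orthogonality Y Z M hM U hU V hV
  have h1 : ((1 : Matrix (Fin c) (Fin c) ℝ) - Vᵀ * V).PosSemidef := by
    have h1e : (1 : Matrix (Fin c) (Fin c) ℝ) - Vᵀ * V = Uᵀ * U := by
      rw [← hUV]; abel
    rw [h1e]
    have := Matrix.posSemidef_conjTranspose_mul_self U
    simpa [conjTranspose_eq_transpose_of_trivial] using this
  have h2 := one_sub_self_mul_transpose_posSemidef V h1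
  have hLQdet : IsUnit LQ.det := (Matrix.isUnit_iff_isUnit_det LQ).mp hLQ
  have hLQdetT : IsUnit LQᵀ.det := by rw [det_transpose]; exact hLQdet
  have hWQ : Wᵀ * Q * W = Lmᵀ * (V * Vᵀ) * Lm := by
    rw [hW, ← hLQQ]
    simp only [transpose_mul, transpose_transpose, Matrix.mul_assoc]
    rw [Matrix.mul_nonsing_inv_cancel_left LQ _ hLQdet]
    rw [Matrix.transpose_nonsing_inv]
    rw [Matrix.nonsing_inv_mul_cancel_left LQᵀ _ hLQdetT]
  have hfin : Xm - Wᵀ * Q * W = Lmᵀ * (1 - V * Vᵀ) * Lm := by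
    rw [hXm, hWQ, Matrix.mul_sub, Matrix.mul_one, Matrix.sub_mul]
  rw [hfin]
  have := h2.mul_mul_conjTranspose_same Lmᵀ
  simpa [conjTranspose_eq_transpose_of_trivial] using this
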